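/- With k' = k + w_p for 1 ≤ p ≤ n−1, the bimodule B(k', k) = eH_{k'}e_p y^p satisfies B(k', k) = U_{k'}·e d_{k'}^p y^p + U_{k'}·e y^n, as left U_{k'}-modules inside Q. -/

import Mathlib

open Finset

/-- ω = e^{2πi/n}, a primitive n-th root of unity. -/
noncomputable def omegaRoot (n : ℕ) : ℂ := Complex.exp (2 * Real.pi * Complex.I / n)


lemma omega_prim {n : ℕ} (hn : 0 < n) : IsPrimitiveRoot (omegaRoot n) n :=
  Complex.isPrimitiveRoot_exp n hn.ne'

lemma omega_pow_n {n : ℕ} (hn : 0 < n) : (omegaRoot n) ^ n = 1 :=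
  (omega_prim hn).pow_eq_one

lemma omega_pow_eq_one_iff {n : ℕ} (hn : 0 < n) (m : ℕ) :
    (omegaRoot n) ^ m = 1 ↔ n ∣ m :=
  (omega_prim hn).pow_eq_one_iff_dvd m

lemma omega_sum {n : ℕ} (hn : 0 < n) (m : ℕ) :
    ∑ j ∈ range n, ((omegaRoot n) ^ m) ^ j = if n ∣ m then (n : ℂ) else 0 := by
  by_cases h : n ∣ m
  · simp only [h, if_true]
    have : (omegaRoot n) ^ m = 1 := (omega_pow_eq_one_iff hn m).mpr h
    simp [this]
  · simp only [h, if_false]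
    set z := (omegaRoot n) ^ m with hz
    have hz1 : z ≠ 1 := fun hc => h ((omega_pow_eq_one_iff hn m).mp hc)
    have hzn : z ^ n = 1 := by
      rw [hz, ← pow_mul, mul_comm, pow_mul, omega_pow_n hn, one_pow]
    have := geom_sum_mul z n
    rw [hzn, sub_self] at this
    rcases mul_eq_zero.mp this with h1 | h2
    · exact h1
    · exact absurd (sub_eq_zero.mp h2) hz1

lemma hdvd_mod {n i j : ℕ} (hn : 0 < n) : (n ∣ i + j * (n - 1)) ↔ i % n = j % n := by
  have hcast : ((i + j * (n - 1) : ℕ) : ℤ) = j * n + ((i : ℤ) - j) := by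
    have h1 : ((n - 1 : ℕ) : ℤ) = (n : ℤ) - 1 := by
      rw [Nat.cast_sub hn]; simp
    push_cast [h1]; ring
  rw [← Int.natCast_dvd_natCast, hcast]
  have hd : (n : ℤ) ∣ (j : ℤ) * n := ⟨j, mul_comm _ _⟩
  rw [dvd_add_right hd]
  constructor
  · intro h
    exact (Nat.modEq_iff_dvd.mpr h).symm
  · intro h
    exact Nat.modEq_iff_dvd.mp (Nat.ModEq.symm h)

lemma omega_pow_mod {n : ℕ} (hn : 0 < n) {i j : ℕ} (h : i % n = j % n) :
    (omegaRoot n) ^ i = (omegaRoot n) ^ j := by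
  have key : ∀ a : ℕ, (omegaRoot n) ^ a = (omegaRoot n) ^ (a % n) := by
    intro a
    conv_lhs => rw [← Nat.div_add_mod a n]
    rw [pow_add, pow_mul, omega_pow_n hn, one_pow, one_mul]
  rw [key i, key j, h]

section EL
variable {Q : Type*} [Ring Q] [Algebra ℂ Q] {n : ℕ} {γ : Q} {e : ℕ → Q}

lemma e_eq_mod (hn : 0 < n)
    (he : ∀ i, e i = (n : ℂ)⁻¹ • ∑ j ∈ range n, ((omegaRoot n) ^ i • γ) ^ j)
    {i j : ℕ} (h : i % n = j % n) : e i = e j := by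
  rw [he i, he j, omega_pow_mod hn h]

lemma beta_mul_e (hn : 0 < n) (hγ : γ ^ n = 1)
    (he : ∀ i, e i = (n : ℂ)⁻¹ • ∑ j ∈ range n, ((omegaRoot n) ^ i • γ) ^ j)
    (i : ℕ) : ((omegaRoot n) ^ i • γ) * e i = e i := by
  set β := (omegaRoot n) ^ i • γ with hβ
  have hβn : β ^ n = 1 := by
    rw [hβ, smul_pow, ← pow_mul, mul_comm i n, pow_mul, omega_pow_n hn, one_pow, hγ, one_smul]
  have key : ∑ j ∈ range n, β ^ (j + 1) = ∑ j ∈ range n, β ^ j := by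
    have h1 := Finset.sum_range_succ' (fun j => β ^ j) n
    have h2 := Finset.sum_range_succ (fun j => β ^ j) n
    rw [h1] at h2
    simpa [hβn] using h2
  rw [he i, ← hβ, mul_smul_comm, Finset.mul_sum]
  congr 1
  calc ∑ j ∈ range n, β * β ^ j = ∑ j ∈ range n, β ^ (j + 1) := by
        refine Finset.sum_congr rfl fun j _ => (pow_succ' β j).symm
    _ = ∑ j ∈ range n, β ^ j := key

lemma e_mul_expand
    (he : ∀ i, e i = (n : ℂ)⁻¹ • ∑ j ∈ range n, ((omegaRoot n) ^ i • γ) ^ j)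
    (i : ℕ) (x : Q) :
    e i * x = (n : ℂ)⁻¹ • ∑ j ∈ range n, ((omegaRoot n) ^ i) ^ j • (γ ^ j * x) := by
  rw [he i, smul_mul_assoc, Finset.sum_mul]
  congr 1
  refine Finset.sum_congr rfl fun j _ => ?_
  rw [smul_pow, smul_mul_assoc]

lemma mul_e_expand
    (he : ∀ i, e i = (n : ℂ)⁻¹ • ∑ j ∈ range n, ((omegaRoot n) ^ i • γ) ^ j)
    (i : ℕ) (x : Q) :
    x * e i = (n : ℂ)⁻¹ • ∑ j ∈ range n, ((omegaRoot n) ^ i) ^ j • (x * γ ^ j) := by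
  rw [he i, mul_smul_comm, Finset.mul_sum]
  congr 1
  refine Finset.sum_congr rfl fun j _ => ?_
  rw [smul_pow, mul_smul_comm]

lemma gamma_mul_e (hn : 0 < n) (hγ : γ ^ n = 1)
    (he : ∀ i, e i = (n : ℂ)⁻¹ • ∑ j ∈ range n, ((omegaRoot n) ^ i • γ) ^ j)
    (i : ℕ) : γ * e i = (omegaRoot n) ^ (i * (n - 1)) • e i := by
  have hγβ : γ = (omegaRoot n) ^ (i * (n - 1)) • ((omegaRoot n) ^ i • γ) := by
    rw [smul_smul, ← pow_add]
    have h2 : i * (n - 1) + i = i * n := by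
      cases n with
      | zero => exact absurd hn (lt_irrefl 0)
      | succ m => simp [Nat.succ_sub_one, Nat.mul_succ]
    rw [h2, mul_comm i n, pow_mul, omega_pow_n hn, one_pow, one_smul]
  conv_lhs => rw [hγβ]
  rw [smul_mul_assoc, beta_mul_e hn hγ he i]

lemma gamma_pow_mul_e (hn : 0 < n) (hγ : γ ^ n = 1)
    (he : ∀ i, e i = (n : ℂ)⁻¹ • ∑ j ∈ range n, ((omegaRoot n) ^ i • γ) ^ j)
    (c i : ℕ) :
    γ ^ c * e i = ((omegaRoot n) ^ (i * (n - 1))) ^ c • e i := by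
  induction c with
  | zero => simp
  | succ m ih =>
    rw [pow_succ, mul_assoc, gamma_mul_e hn hγ he i, mul_smul_comm, ih, smul_smul,
      ← pow_succ']

lemma e_mul_gamma_pow
    (he : ∀ i, e i = (n : ℂ)⁻¹ • ∑ j ∈ range n, ((omegaRoot n) ^ i • γ) ^ j)
    (c i : ℕ) : e i * γ ^ c = γ ^ c * e i := by
  rw [mul_e_expand he, e_mul_expand he]
  congr 1
  refine Finset.sum_congr rfl fun j _ => ?_
  rw [← pow_add, ← pow_add, add_comm]

lemma e_mul_e (hn : 0 < n) (hγ : γ ^ n = 1)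
    (he : ∀ i, e i = (n : ℂ)⁻¹ • ∑ j ∈ range n, ((omegaRoot n) ^ i • γ) ^ j)
    (i j : ℕ) :
    e i * e j = if i % n = j % n then e j else 0 := by
  rw [e_mul_expand he i (e j)]
  have key : ∀ a ∈ range n, ((omegaRoot n) ^ i) ^ a • (γ ^ a * e j)
      = ((omegaRoot n) ^ (i + j * (n-1))) ^ a • e j := by
    intro a _
    rw [gamma_pow_mul_e hn hγ he, smul_smul, ← mul_pow, ← pow_add]
  rw [Finset.sum_congr rfl key, ← Finset.sum_smul, omega_sum hn]
  by_cases h : i % n = j % n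
  · rw [if_pos ((hdvd_mod hn).mpr h), if_pos h, smul_smul,
      inv_mul_cancel₀ (by exact_mod_cast hn.ne' : (n:ℂ) ≠ 0), one_smul]
  · rw [if_neg (fun hc => h ((hdvd_mod hn).mp hc)), if_neg h, zero_smul, smul_zero]

lemma move_right (hn : 0 < n)
    (he : ∀ i, e i = (n : ℂ)⁻¹ • ∑ j ∈ range n, ((omegaRoot n) ^ i • γ) ^ j)
    {x : Q} {m : ℕ} (hm : x * γ = (omegaRoot n) ^ m • (γ * x)) (i : ℕ) :
    x * e i = e (i + m) * x := by
  have hpow : ∀ j : ℕ, x * γ ^ j = ((omegaRoot n) ^ m) ^ j • (γ ^ j * x) := by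
    intro j
    induction j with
    | zero => simp
    | succ a ih =>
      rw [pow_succ, ← mul_assoc, ih, smul_mul_assoc, mul_assoc, hm, mul_smul_comm,
        smul_smul, ← pow_succ, ← mul_assoc, ← pow_succ]
  rw [mul_e_expand he, e_mul_expand he]
  congr 1
  refine Finset.sum_congr rfl fun j _ => ?_
  rw [hpow j, smul_smul, ← mul_pow, ← pow_add]

lemma move_left (hn : 0 < n)
    (he : ∀ i, e i = (n : ℂ)⁻¹ • ∑ j ∈ range n, ((omegaRoot n) ^ i • γ) ^ j)
    {x : Q} {m : ℕ} (hm : x * γ = (omegaRoot n) ^ m • (γ * x)) (hmn : m ≤ n) (i : ℕ) :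
    e i * x = x * e (i + (n - m)) := by
  rw [move_right hn he hm (i + (n - m))]
  have h1 : i + (n - m) + m = i + n := by omega
  rw [h1]
  have h2 : e (i + n) = e i := e_eq_mod hn he (Nat.add_mod_right i n)
  rw [h2]

end EL

section GEN
variable {Q : Type*} [Ring Q] [Algebra ℂ Q]

lemma flip_rel {n : ℕ} (hn : 0 < n) {ω : ℂ} (hω : ω ^ n = 1) {a b : Q}
    (h : a * b = ω • (b * a)) : b * a = ω ^ (n - 1) • (a * b) := by
  rw [h, smul_smul]
  have h1 : ω ^ (n - 1) * ω = 1 := by rw [← pow_succ, Nat.sub_add_cancel hn, hω]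
  rw [h1, one_smul]

lemma swap_pow_right {ω : ℂ} {x g : Q} (h : x * g = ω • (g * x)) (c : ℕ) :
    x * g ^ c = ω ^ c • (g ^ c * x) := by
  induction c with
  | zero => simp
  | succ a ih =>
    rw [pow_succ, ← mul_assoc, ih, smul_mul_assoc, mul_assoc, h, mul_smul_comm,
      smul_smul, ← pow_succ, ← mul_assoc, ← pow_succ]

lemma swap_pows {ω : ℂ} {x g : Q} (h : x * g = ω • (g * x)) (a c : ℕ) :
    x ^ a * g ^ c = (ω ^ (a * c)) • (g ^ c * x ^ a) := by
  induction a with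
  | zero => simp
  | succ b ih =>
    rw [pow_succ, mul_assoc, swap_pow_right h c, mul_smul_comm, ← mul_assoc, ih,
      smul_mul_assoc, smul_smul, ← pow_add, mul_assoc, ← pow_succ]
    congr 2
    ring

lemma iter_move {e : ℕ → Q} {x : Q} {m : ℕ} (h : ∀ i, x * e i = e (i + m) * x) :
    ∀ b i, x ^ b * e i = e (i + m * b) * x ^ b := by
  intro b
  induction b with
  | zero => intro i; simp
  | succ a ih =>
    intro i
    rw [pow_succ, mul_assoc, h i, ← mul_assoc, ih (i + m), mul_assoc, ← pow_succ]
    congr 2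
    ring

lemma iter_move' {e : ℕ → Q} {x : Q} {m : ℕ} (h : ∀ i, e i * x = x * e (i + m)) :
    ∀ b i, e i * x ^ b = x ^ b * e (i + m * b) := by
  intro b
  induction b with
  | zero => intro i; simp
  | succ a ih =>
    intro i
    rw [pow_succ, ← mul_assoc, ih i, mul_assoc, h (i + m * a), ← mul_assoc, ← pow_succ]
    congr 2
    ring

lemma span_mul_mem {M : Submodule ℂ Q} (u v : Q) {s : Set Q}
    (h : ∀ m ∈ s, u * m * v ∈ M) {z : Q} (hz : z ∈ Submodule.span ℂ s) :
    u * z * v ∈ M := by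
  induction hz using Submodule.span_induction with
  | mem a ha => exact h a ha
  | zero => simpa using M.zero_mem
  | add a b _ _ ha hb =>
    have : u * (a + b) * v = u * a * v + u * b * v := by
      rw [mul_add, add_mul]
    rw [this]; exact M.add_mem ha hb
  | smul r a _ ha =>
    have : u * (r • a) * v = r • (u * a * v) := by
      rw [mul_smul_comm, smul_mul_assoc]
    rw [this]; exact M.smul_mem r ha
end GEN

/-- With `k' = k + w_p` (`1 ≤ p ≤ n−1`), the basic bimodule
`B(k', k) = e H_{k'} e_p y^p` satisfies
`B(k', k) = U_{k'} · e d_{k'}^p y^p + U_{k'} · e y^n` as left `U_{k'}`-modules in `Q`. -/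
theorem statement6 {Q : Type*} [Ring Q] [Algebra ℂ Q] (n : ℕ) (hn : 0 < n)
    (y yinv d γ : Q)
    (hy : y * yinv = 1) (hy' : yinv * y = 1)
    (hWeyl : d * y - y * d = 1)
    (hγ : γ ^ n = 1)
    (hyγ : y * γ = omegaRoot n • (γ * y))
    (hγd : γ * d = omegaRoot n • (d * γ))
    (e : ℕ → Q)
    (he : ∀ i, e i = (n : ℂ)⁻¹ • ∑ j ∈ range n, ((omegaRoot n) ^ i • γ) ^ j)
    (k k' : ℤ → ℂ) (hk0 : k 0 = 0) (hkper : ∀ j : ℤ, k (j + n) = k j)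
    (p : ℕ) (hp1 : 1 ≤ p) (hpn : p ≤ n - 1)
    (hk'0 : k' 0 = 0) (hk'per : ∀ j : ℤ, k' (j + n) = k' j)
    (hk'lo : ∀ i : ℕ, 1 ≤ i → i ≤ p → k' i = k i + n)
    (hk'hi : ∀ i : ℕ, p < i → i ≤ n - 1 → k' i = k i)
    (dk dk' : Q)
    (hdk : dk = d - yinv * ∑ i ∈ Icc 1 (n - 1), k i • e i)
    (hdk' : dk' = d - yinv * ∑ i ∈ Icc 1 (n - 1), k' i • e i)
    (U' B : Submodule ℂ Q)
    (hU' : U' = Submodule.span ℂ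
      ((fun h => e 0 * h * e 0) '' (Algebra.adjoin ℂ {dk', y, γ} : Set Q)))
    (hB : B = Submodule.span ℂ
      ((fun h => e 0 * h * (e p * y ^ p)) '' (Algebra.adjoin ℂ {dk', y, γ} : Set Q))) :
    B = U' * Submodule.span ℂ {e 0 * dk' ^ p * y ^ p}
        ⊔ U' * Submodule.span ℂ {e 0 * y ^ n} := by
  have hω : (omegaRoot n) ^ n = 1 := omega_pow_n hn
  set ω : ℂ := omegaRoot n with hωdef
  -- basic commutation relations
  have rel_yγ : y * γ = ω ^ 1 • (γ * y) := by rw [pow_one]; exact hyγ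
  have rel_γy : γ * y = ω ^ (n - 1) • (y * γ) := flip_rel hn hω hyγ
  have rel_γyinv : γ * yinv = ω • (yinv * γ) := by
    have h1 : γ * yinv = yinv * (y * γ) * yinv := by
      rw [← mul_assoc, hy', one_mul]
    rw [h1, hyγ, mul_smul_comm, smul_mul_assoc]
    congr 1
    rw [mul_assoc, mul_assoc, hy, mul_one]
  have rel_yinvγ : yinv * γ = ω ^ (n - 1) • (γ * yinv) := flip_rel hn hω rel_γyinv
  -- Ck and its relations
  set Ck : Q := ∑ i ∈ Icc 1 (n - 1), k' i • e i with hCk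
  have rel_Ckγ : Ck * γ = γ * Ck := by
    rw [hCk, Finset.sum_mul, Finset.mul_sum]
    refine Finset.sum_congr rfl fun i _ => ?_
    rw [smul_mul_assoc, mul_smul_comm]
    congr 1
    have := e_mul_gamma_pow he 1 i
    rwa [pow_one] at this
  have rel_γdk' : γ * dk' = ω • (dk' * γ) := by
    have h2 : γ * (yinv * Ck) = ω • (yinv * Ck * γ) := by
      rw [← mul_assoc, rel_γyinv, smul_mul_assoc, mul_assoc, ← rel_Ckγ, ← mul_assoc]
    rw [hdk', mul_sub, sub_mul, smul_sub, hγd, h2]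
  have rel_dk'γ : dk' * γ = ω ^ (n - 1) • (γ * dk') := flip_rel hn hω rel_γdk'
  -- moves
  have mv_y : ∀ i, y * e i = e (i + 1) * y := move_right hn he rel_yγ
  have mv_y' : ∀ i, e i * y = y * e (i + (n - 1)) := fun i => by
    have := move_left hn he rel_yγ hn i
    rwa [] at this
  have mv_dk : ∀ i, dk' * e i = e (i + (n - 1)) * dk' := move_right hn he rel_dk'γ
  have mv_dk' : ∀ i, e i * dk' = dk' * e (i + 1) := fun i => by
    have h1 : n - (n - 1) = 1 := by omega
    have := move_left hn he rel_dk'γ (Nat.sub_le n 1) i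
    rwa [h1] at this
  -- power moves
  have ypow_e : ∀ b i, y ^ b * e i = e (i + b) * y ^ b := by
    intro b i
    have := iter_move mv_y b i
    rwa [one_mul] at this
  have e_ypow : ∀ b i, e i * y ^ b = y ^ b * e (i + (n - 1) * b) := fun b i =>
    iter_move' mv_y' b i
  have dkpow_e : ∀ b i, dk' ^ b * e i = e (i + (n - 1) * b) * dk' ^ b := fun b i =>
    iter_move mv_dk b i
  have e_dkpow : ∀ b i, e i * dk' ^ b = dk' ^ b * e (i + b) := by
    intro b i
    have := iter_move' mv_dk' b i
    rwa [one_mul] at this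
  -- gamma power swaps
  have g_y : ∀ c s, γ ^ c * y ^ s = (ω ^ (n-1)) ^ (c * s) • (y ^ s * γ ^ c) :=
    fun c s => swap_pows rel_γy c s
  have g_dk : ∀ c t, γ ^ c * dk' ^ t = ω ^ (c * t) • (dk' ^ t * γ ^ c) :=
    fun c t => swap_pows rel_γdk' c t
  have dk_g : ∀ t c, dk' ^ t * γ ^ c = (ω ^ (n-1)) ^ (t * c) • (γ ^ c * dk' ^ t) :=
    fun t c => swap_pows rel_dk'γ t c
  -- special e facts
  have ee := e_mul_e hn hγ he
  have e00 : e 0 * e 0 = e 0 := by simpa using ee 0 0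
  have gc_e0 : ∀ c, γ ^ c * e 0 = e 0 := by
    intro c
    have := gamma_pow_mul_e hn hγ he c 0
    simpa using this
  have ep_yp : e p * y ^ p = y ^ p * e 0 := by
    rw [e_ypow p p]
    congr 1
    refine e_eq_mod hn he ?_
    have : p + (n - 1) * p = n * p := by
      cases n with
      | zero => omega
      | succ m => simp [Nat.succ_sub_one, Nat.succ_mul]; ring
    simp [this, Nat.mul_mod_right]
  have e0_yn : e 0 * y ^ n = y ^ n * e 0 := by
    rw [e_ypow n 0]
    congr 1
    refine e_eq_mod hn he ?_
    simp [Nat.mul_mod_right]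
  have e0_dkp : e 0 * dk' ^ p = dk' ^ p * e p := by
    have := e_dkpow p 0
    rwa [zero_add] at this
  -- the Dunkl commutator [dk', y] = Sel ∈ ℂ[Γ]
  set Ckm : Q := ∑ i ∈ Icc 1 (n - 1), k' i • e (i - 1) with hCkm
  have hCky : Ck * y = y * Ckm := by
    rw [hCk, hCkm, Finset.sum_mul, Finset.mul_sum]
    refine Finset.sum_congr rfl fun i hi => ?_
    rw [smul_mul_assoc, mul_smul_comm]
    congr 1
    rw [mv_y' i]
    congr 1
    refine e_eq_mod hn he ?_
    have hi1 : 1 ≤ i := (Finset.mem_Icc.mp hi).1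
    have : i + (n - 1) = (i - 1) + n := by omega
    rw [this, Nat.add_mod_right]
  set Sel : Q := 1 + Ck - Ckm with hSel_def
  have hS : dk' * y = y * dk' + Sel := by
    have h1 : dk' * y = y * d + 1 - Ckm := by
      rw [hdk', sub_mul, mul_assoc, hCky, ← mul_assoc, hy', one_mul]
      have hdy : d * y = y * d + 1 := by
        have := hWeyl
        linear_combination (norm := noncomm_ring) this
      rw [hdy]
    have h2 : y * dk' = y * d - Ck := by
      rw [hdk', mul_sub, ← mul_assoc, hy, one_mul]
    rw [h1, h2, hSel_def]
    noncomm_ring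
  -- ℂ[Γ] and membership of e i and Sel
  set VG : Submodule ℂ Q := Submodule.span ℂ (Set.range fun c : ℕ => γ ^ c) with hVG
  have he_VG : ∀ i, e i ∈ VG := by
    intro i
    rw [he i]
    refine Submodule.smul_mem _ _ (Submodule.sum_mem _ fun j _ => ?_)
    rw [smul_pow]
    exact Submodule.smul_mem _ _ (Submodule.subset_span ⟨j, rfl⟩)
  have hSelVG : Sel ∈ VG := by
    rw [hSel_def]
    refine Submodule.sub_mem _ (Submodule.add_mem _ ?_ ?_) ?_
    · exact Submodule.subset_span ⟨0, pow_zero γ⟩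
    · exact Submodule.sum_mem _ fun i _ => Submodule.smul_mem _ _ (he_VG i)
    · exact Submodule.sum_mem _ fun i _ => Submodule.smul_mem _ _ (he_VG (i-1))
  -- first-order commutator with powers of y
  have comm1 : ∀ a : ℕ, dk' * y ^ a - y ^ a * dk' ∈
      Submodule.span ℂ {m : Q | ∃ s c : ℕ, s + 1 = a ∧ m = y ^ s * γ ^ c} := by
    intro a
    induction a with
    | zero => simp
    | succ a ih =>
      have key : dk' * y ^ (a+1) - y ^ (a+1) * dk'
          = y * (dk' * y ^ a - y ^ a * dk') * 1 + 1 * Sel * y ^ a := by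
        have h1 : dk' * y ^ (a+1) = (y * dk' + Sel) * y ^ a := by
          rw [pow_succ', ← mul_assoc, hS]
        rw [h1, pow_succ']
        noncomm_ring
      rw [key]
      refine Submodule.add_mem _ ?_ ?_
      · refine span_mul_mem y 1 ?_ ih
        rintro m ⟨s, c, hs, rfl⟩
        refine Submodule.subset_span ⟨s + 1, c, by omega, ?_⟩
        rw [mul_one, ← mul_assoc, ← pow_succ']
      · refine span_mul_mem 1 (y ^ a) ?_ hSelVG
        rintro m ⟨c, rfl⟩
        rw [one_mul, g_y c a]
        exact Submodule.smul_mem _ _ (Submodule.subset_span ⟨a, c, rfl, rfl⟩)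
  -- higher commutators
  have commKey : ∀ b a : ℕ, dk' ^ b * y ^ a - y ^ a * dk' ^ b ∈
      Submodule.span ℂ {m : Q | ∃ s c t : ℕ, t < b ∧ s + b = t + a ∧
        m = y ^ s * γ ^ c * dk' ^ t} := by
    intro b
    induction b with
    | zero => intro a; simp
    | succ b ihb =>
      intro a
      have key : dk' ^ (b+1) * y ^ a - y ^ a * dk' ^ (b+1)
          = 1 * (dk' * y ^ a - y ^ a * dk') * dk' ^ b
            + dk' * (dk' ^ b * y ^ a - y ^ a * dk' ^ b) * 1 := by
        rw [pow_succ']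
        noncomm_ring
      rw [key]
      refine Submodule.add_mem _ ?_ ?_
      · refine span_mul_mem 1 (dk' ^ b) ?_ (comm1 a)
        rintro m ⟨s, c, hs, rfl⟩
        refine Submodule.subset_span ⟨s, c, b, b.lt_succ_self, by omega, ?_⟩
        rw [one_mul]
      · refine span_mul_mem dk' 1 ?_ (ihb a)
        rintro m ⟨s, c, t, ht, hst, rfl⟩
        have hdg : dk' * γ ^ c = (ω ^ (n-1)) ^ c • (γ ^ c * dk') := by
          have := dk_g 1 c
          simpa using this
        have expand : dk' * (y ^ s * γ ^ c * dk' ^ t) * 1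
            = (ω ^ (n-1)) ^ c • (y ^ s * γ ^ c * dk' ^ (t+1))
              + 1 * (dk' * y ^ s - y ^ s * dk') * (γ ^ c * dk' ^ t) := by
          rw [mul_one]
          have h1 : dk' * (y ^ s * γ ^ c * dk' ^ t)
              = ((dk' * y ^ s) * γ ^ c) * dk' ^ t := by
            simp only [mul_assoc]
          rw [h1, ← add_sub_cancel (y ^ s * dk') (dk' * y ^ s)]
          rw [add_mul, add_mul]
          congr 1
          · rw [mul_assoc (y ^ s) dk' (γ ^ c), hdg, mul_smul_comm, smul_mul_assoc]
            congr 1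
            simp only [mul_assoc, ← pow_succ']
          · rw [add_sub_cancel_left, one_mul, mul_assoc]
        rw [expand]
        refine Submodule.add_mem _ ?_ ?_
        · exact Submodule.smul_mem _ _
            (Submodule.subset_span ⟨s, c, t+1, by omega, by omega, rfl⟩)
        · refine span_mul_mem 1 (γ ^ c * dk' ^ t) ?_ (comm1 s)
          rintro m ⟨s', c', hs', rfl⟩
          refine Submodule.subset_span ⟨s', c' + c, t, by omega, by omega, ?_⟩
          rw [one_mul, pow_add]
          simp only [mul_assoc]
  -- spanning set of monomials
  set Mon : Set Q := {m | ∃ a c b : ℕ, m = y ^ a * γ ^ c * dk' ^ b} with hMon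
  set W : Submodule ℂ Q := Submodule.span ℂ Mon with hW
  have hK : ∀ b a : ℕ, dk' ^ b * y ^ a ∈ Submodule.span ℂ
      {m : Q | ∃ s c t : ℕ, s + b = t + a ∧ m = y ^ s * γ ^ c * dk' ^ t} := by
    intro b a
    have h1 : dk' ^ b * y ^ a = y ^ a * dk' ^ b + (dk' ^ b * y ^ a - y ^ a * dk' ^ b) := by
      rw [add_sub_cancel]
    rw [h1]
    refine Submodule.add_mem _ ?_ ?_
    · exact Submodule.subset_span ⟨a, 0, b, by omega, by simp⟩
    · refine Submodule.span_mono ?_ (commKey b a)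
      rintro m ⟨s, c, t, _, hst, rfl⟩
      exact ⟨s, c, t, hst, rfl⟩
  have monXmon : ∀ a c s c2 t c' b' : ℕ,
      (y ^ a * γ ^ c) * (y ^ s * γ ^ c2 * dk' ^ t) * (γ ^ c' * dk' ^ b') ∈ W := by
    intro a c s c2 t c' b'
    have key : (y ^ a * γ ^ c) * (y ^ s * γ ^ c2 * dk' ^ t) * (γ ^ c' * dk' ^ b')
        = ((ω ^ (n-1)) ^ (c * s) * (ω ^ (n-1)) ^ (t * c')) •
            (y ^ (a+s) * γ ^ (c + (c2 + c')) * dk' ^ (t + b')) := by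
      have e1 : (y ^ a * γ ^ c) * (y ^ s * γ ^ c2 * dk' ^ t) * (γ ^ c' * dk' ^ b')
          = y ^ a * ((γ ^ c * y ^ s) * (γ ^ c2 * ((dk' ^ t * γ ^ c') * dk' ^ b'))) := by
        simp only [mul_assoc]
      rw [e1, g_y, dk_g]
      simp only [smul_mul_assoc, mul_smul_comm, smul_smul, pow_add]
      simp only [mul_assoc]
      rw [mul_comm ((ω ^ (n-1)) ^ (t * c')) ((ω ^ (n-1)) ^ (c * s))]
    rw [key]
    exact W.smul_mem _ (Submodule.subset_span ⟨a+s, c+(c2+c'), t+b', rfl⟩)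
  have hWW : ∀ z1 ∈ W, ∀ z2 ∈ W, z1 * z2 ∈ W := by
    intro z1 h1 z2 h2
    have main : (1 : Q) * z1 * z2 ∈ W := by
      refine span_mul_mem 1 z2 ?_ h1
      rintro m ⟨a, c, b, rfl⟩
      rw [one_mul]
      have main2 : (y ^ a * γ ^ c * dk' ^ b) * z2 * 1 ∈ W := by
        refine span_mul_mem _ 1 ?_ h2
        rintro m' ⟨a', c', b', rfl⟩
        rw [mul_one]
        have e1 : (y ^ a * γ ^ c * dk' ^ b) * (y ^ a' * γ ^ c' * dk' ^ b')
            = (y ^ a * γ ^ c) * (dk' ^ b * y ^ a') * (γ ^ c' * dk' ^ b') := by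
          simp only [mul_assoc]
        rw [e1]
        refine span_mul_mem _ _ ?_ (hK b a')
        rintro m ⟨s, c2, t, hst, rfl⟩
        exact monXmon a c s c2 t c' b'
      simpa using main2
    simpa using main
  have hAdjW : ∀ h ∈ Algebra.adjoin ℂ ({dk', y, γ} : Set Q), h ∈ W := by
    intro h hh
    induction hh using Algebra.adjoin_induction with
    | mem x hx =>
      rcases hx with rfl | rfl | rfl
      · exact Submodule.subset_span ⟨0, 0, 1, by simp⟩
      · exact Submodule.subset_span ⟨1, 0, 0, by simp⟩
      · exact Submodule.subset_span ⟨0, 1, 0, by simp⟩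
    | algebraMap r =>
      rw [Algebra.algebraMap_eq_smul_one]
      exact W.smul_mem r (Submodule.subset_span ⟨0, 0, 0, by simp⟩)
    | add x₁ x₂ hx₁ hx₂ ih₁ ih₂ => exact W.add_mem ih₁ ih₂
    | mul x₁ x₂ hx₁ hx₂ ih₁ ih₂ => exact hWW _ ih₁ _ ih₂
  -- names for the generators and the right-hand side
  set RHS : Submodule ℂ Q :=
    U' * Submodule.span ℂ {e 0 * dk' ^ p * y ^ p}
      ⊔ U' * Submodule.span ℂ {e 0 * y ^ n} with hRHS
  have hdkA : dk' ∈ Algebra.adjoin ℂ ({dk', y, γ} : Set Q) :=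
    Algebra.subset_adjoin (Set.mem_insert _ _)
  have hyA : y ∈ Algebra.adjoin ℂ ({dk', y, γ} : Set Q) :=
    Algebra.subset_adjoin (Set.mem_insert_of_mem _ (Set.mem_insert _ _))
  have hγA : γ ∈ Algebra.adjoin ℂ ({dk', y, γ} : Set Q) :=
    Algebra.subset_adjoin (Set.mem_insert_of_mem _ (Set.mem_insert_of_mem _ rfl))
  have hU'mem : ∀ h ∈ Algebra.adjoin ℂ ({dk', y, γ} : Set Q), e 0 * h * e 0 ∈ U' := by
    intro h hh
    rw [hU']
    exact Submodule.subset_span ⟨h, hh, rfl⟩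
  -- the key recursion
  have R : ∀ t a m' : ℕ, a = t + (m' + 1) * n →
      e 0 * (y ^ a * dk' ^ t) * e 0 ∈ RHS := by
    intro t
    induction t using Nat.strong_induction_on with
    | _ t IH =>
      intro a m' ha
      set B0 : ℕ := t + m' * n with hB0
      have haB : a = B0 + n := by
        rw [ha, hB0, Nat.succ_mul]
        ring
      have hterm1 : (e 0 * (y ^ B0 * dk' ^ t) * e 0) * (e 0 * y ^ n)
          = e 0 * (y ^ B0 * (dk' ^ t * y ^ n)) * e 0 := by
        simp only [mul_assoc]
        rw [← mul_assoc (e 0) (e 0) (y ^ n), e00, e0_yn]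
      have split : e 0 * (y ^ a * dk' ^ t) * e 0
          = (e 0 * (y ^ B0 * dk' ^ t) * e 0) * (e 0 * y ^ n)
            - (e 0 * y ^ B0) * (dk' ^ t * y ^ n - y ^ n * dk' ^ t) * e 0 := by
        rw [hterm1, haB, pow_add]
        noncomm_ring
      rw [split]
      refine Submodule.sub_mem _ ?_ ?_
      · have hu : e 0 * (y ^ B0 * dk' ^ t) * e 0 ∈ U' :=
          hU'mem _ (mul_mem (pow_mem hyA B0) (pow_mem hdkA t))
        exact Submodule.mem_sup_right
          (Submodule.mul_mem_mul hu (Submodule.mem_span_singleton_self (e 0 * y ^ n)))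
      · refine span_mul_mem _ _ ?_ (commKey t n)
        rintro mm ⟨s, c, t', ht', hst, rfl⟩
        have key2 : (e 0 * y ^ B0) * (y ^ s * γ ^ c * dk' ^ t') * e 0
            = ω ^ (c * t') • (e 0 * (y ^ (B0 + s) * dk' ^ t') * e 0) := by
          calc (e 0 * y ^ B0) * (y ^ s * γ ^ c * dk' ^ t') * e 0
              = e 0 * (y ^ B0 * (y ^ s * (γ ^ c * (dk' ^ t' * e 0)))) := by
                simp only [mul_assoc]
            _ = e 0 * (y ^ B0 * (y ^ s * (ω ^ (c * t') • (dk' ^ t' * e 0)))) := by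
                rw [← mul_assoc (γ ^ c), g_dk c t', smul_mul_assoc, mul_assoc, gc_e0 c]
            _ = ω ^ (c * t') • (e 0 * (y ^ (B0 + s) * dk' ^ t') * e 0) := by
                simp only [mul_smul_comm, pow_add, mul_assoc]
        rw [key2]
        have hidx : B0 + s = t' + (m' + 1) * n := by
          have h5 : (m' + 1) * n = m' * n + n := Nat.succ_mul m' n
          omega
        exact Submodule.smul_mem _ _ (IH t' ht' (B0 + s) m' hidx)
  -- the core membership
  have CORE : ∀ a b : ℕ, (p + a) % n = b % n →
      e 0 * (y ^ a * dk' ^ b * y ^ p) * e 0 ∈ RHS := by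
    intro a b hcon
    by_cases hbp : p ≤ b
    · -- case A : factor through e 0 * dk'^p * y^p
      have hu : e 0 * (y ^ a * dk' ^ (b - p)) * e 0 ∈ U' :=
        hU'mem _ (mul_mem (pow_mem hyA a) (pow_mem hdkA (b - p)))
      have claim : (e 0 * (y ^ a * dk' ^ (b - p)) * e 0) * (e 0 * dk' ^ p * y ^ p)
          = e 0 * (y ^ a * dk' ^ b * y ^ p) * e 0 := by
        calc (e 0 * (y ^ a * dk' ^ (b - p)) * e 0) * (e 0 * dk' ^ p * y ^ p)
            = e 0 * (y ^ a * (dk' ^ (b - p) * (e 0 * (e 0 * (dk' ^ p * y ^ p))))) := by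
              simp only [mul_assoc]
          _ = e 0 * (y ^ a * (dk' ^ (b - p) * (e 0 * (dk' ^ p * y ^ p)))) := by
              rw [← mul_assoc (e 0) (e 0), e00]
          _ = e 0 * (y ^ a * (dk' ^ (b - p) * (dk' ^ p * (e p * y ^ p)))) := by
              rw [← mul_assoc (e 0) (dk' ^ p), e0_dkp, mul_assoc]
          _ = e 0 * (y ^ a * (dk' ^ (b - p) * (dk' ^ p * (y ^ p * e 0)))) := by rw [ep_yp]
          _ = e 0 * (y ^ a * dk' ^ b * y ^ p) * e 0 := by
              rw [show dk' ^ (b - p) * (dk' ^ p * (y ^ p * e 0))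
                  = (dk' ^ (b - p) * dk' ^ p) * (y ^ p * e 0) from by simp only [mul_assoc],
                ← pow_add, Nat.sub_add_cancel hbp]
              simp only [mul_assoc]
      rw [← claim]
      exact Submodule.mem_sup_left
        (Submodule.mul_mem_mul hu (Submodule.mem_span_singleton_self _))
    · -- case B : b < p
      push_neg at hbp
      have hble : b ≤ p + a := by omega
      have hdvd : n ∣ (p + a - b) := (Nat.modEq_iff_dvd' hble).mp (Nat.ModEq.symm hcon)
      obtain ⟨mq, hmq⟩ := hdvd
      rcases mq with _ | mq'
      · omega
      have split : e 0 * (y ^ a * dk' ^ b * y ^ p) * e 0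
          = e 0 * (y ^ (a + p) * dk' ^ b) * e 0
            + (e 0 * y ^ a) * (dk' ^ b * y ^ p - y ^ p * dk' ^ b) * e 0 := by
        rw [pow_add]
        noncomm_ring
      rw [split]
      refine Submodule.add_mem _ ?_ ?_
      · refine R b (a + p) mq' ?_
        have h6 : (mq' + 1) * n = n * (mq' + 1) := Nat.mul_comm _ _
        omega
      · refine span_mul_mem _ _ ?_ (commKey b p)
        rintro mm ⟨s, c, t, ht, hst, rfl⟩
        have key2 : (e 0 * y ^ a) * (y ^ s * γ ^ c * dk' ^ t) * e 0
            = ω ^ (c * t) • (e 0 * (y ^ (a + s) * dk' ^ t) * e 0) := by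
          calc (e 0 * y ^ a) * (y ^ s * γ ^ c * dk' ^ t) * e 0
              = e 0 * (y ^ a * (y ^ s * (γ ^ c * (dk' ^ t * e 0)))) := by
                simp only [mul_assoc]
            _ = e 0 * (y ^ a * (y ^ s * (ω ^ (c * t) • (dk' ^ t * e 0)))) := by
                rw [← mul_assoc (γ ^ c), g_dk c t, smul_mul_assoc, mul_assoc, gc_e0 c]
            _ = ω ^ (c * t) • (e 0 * (y ^ (a + s) * dk' ^ t) * e 0) := by
                simp only [mul_smul_comm, pow_add, mul_assoc]
        rw [key2]
        refine Submodule.smul_mem _ _ (R t (a + s) mq' ?_)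
        have h6 : (mq' + 1) * n = n * (mq' + 1) := Nat.mul_comm _ _
        omega
  -- bridging: under the congruence we may add a trailing idempotent
  have move0 : ∀ (X : Q) (i a : ℕ), e i * (y ^ a * X) = y ^ a * (e (i + (n-1)*a) * X) := by
    intro X i a
    rw [← mul_assoc, e_ypow a i, mul_assoc]
  have move1 : ∀ (X : Q) (i b : ℕ), e i * (dk' ^ b * X) = dk' ^ b * (e (i + b) * X) := by
    intro X i b
    rw [← mul_assoc, e_dkpow b i, mul_assoc]
  have BR : ∀ a b : ℕ, (p + a) % n = b % n →
      e 0 * (y ^ a * dk' ^ b) * y ^ p = e 0 * (y ^ a * dk' ^ b * y ^ p) * e 0 := by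
    intro a b hcon
    have hcon' : b % n = (a + p) % n := by rw [add_comm a p]; exact hcon.symm
    have hJd : n ∣ b + (a + p) * (n - 1) := (hdvd_mod hn).mpr hcon'
    have hJ8 : (n-1)*a + b + (n-1)*p = b + (a + p) * (n - 1) := by ring
    have heJ : e ((n-1)*a + b + (n-1)*p) = e 0 := by
      refine e_eq_mod hn he ?_
      obtain ⟨q, hq⟩ := hJd
      rw [hJ8, hq, Nat.mul_mod_right, Nat.zero_mod]
    have hidx : 0 + (n-1)*a + b + (n-1)*p = (n-1)*a + b + (n-1)*p := by omega
    have hL : e 0 * (y ^ a * dk' ^ b) * y ^ p = y ^ a * (dk' ^ b * (y ^ p * e 0)) := by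
      calc e 0 * (y ^ a * dk' ^ b) * y ^ p
          = e 0 * (y ^ a * (dk' ^ b * y ^ p)) := by simp only [mul_assoc]
        _ = y ^ a * (e (0 + (n-1)*a) * (dk' ^ b * y ^ p)) := by rw [move0]
        _ = y ^ a * (dk' ^ b * (e (0 + (n-1)*a + b) * y ^ p)) := by rw [move1]
        _ = y ^ a * (dk' ^ b * (y ^ p * e (0 + (n-1)*a + b + (n-1)*p))) := by
            rw [e_ypow p]
        _ = y ^ a * (dk' ^ b * (y ^ p * e 0)) := by rw [hidx, heJ]
    have hR : e 0 * (y ^ a * dk' ^ b * y ^ p) * e 0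
        = y ^ a * (dk' ^ b * (y ^ p * e 0)) := by
      calc e 0 * (y ^ a * dk' ^ b * y ^ p) * e 0
          = e 0 * (y ^ a * (dk' ^ b * (y ^ p * e 0))) := by simp only [mul_assoc]
        _ = y ^ a * (e (0 + (n-1)*a) * (dk' ^ b * (y ^ p * e 0))) := by rw [move0]
        _ = y ^ a * (dk' ^ b * (e (0 + (n-1)*a + b) * (y ^ p * e 0))) := by rw [move1]
        _ = y ^ a * (dk' ^ b * (y ^ p * (e (0 + (n-1)*a + b + (n-1)*p) * e 0))) := by
            rw [← mul_assoc (e (0 + (n-1)*a + b)) (y ^ p), e_ypow p, mul_assoc]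
        _ = y ^ a * (dk' ^ b * (y ^ p * e 0)) := by rw [hidx, heJ, e00]
    rw [hL, hR]
  -- monomial membership
  have MONO : ∀ mm ∈ Mon, e 0 * mm * (e p * y ^ p) ∈ RHS := by
    rintro mm ⟨a, c, b, rfl⟩
    have key : e 0 * (y ^ a * γ ^ c * dk' ^ b) * (e p * y ^ p)
        = ((ω ^ ((p + (n-1)*b) * (n - 1))) ^ c) •
          ((e 0 * e (p + (n-1)*b + a)) * (y ^ a * (dk' ^ b * y ^ p))) := by
      calc e 0 * (y ^ a * γ ^ c * dk' ^ b) * (e p * y ^ p)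
          = e 0 * (y ^ a * (γ ^ c * ((dk' ^ b * e p) * y ^ p))) := by
            simp only [mul_assoc]
        _ = e 0 * (y ^ a * (γ ^ c * ((e (p + (n-1)*b) * dk' ^ b) * y ^ p))) := by
            rw [dkpow_e b p]
        _ = e 0 * (y ^ a * ((γ ^ c * e (p + (n-1)*b)) * (dk' ^ b * y ^ p))) := by
            simp only [mul_assoc]
        _ = e 0 * (y ^ a * ((((ω ^ ((p + (n-1)*b) * (n - 1))) ^ c) • e (p + (n-1)*b))
              * (dk' ^ b * y ^ p))) := by
            rw [gamma_pow_mul_e hn hγ he c (p + (n-1)*b)]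
        _ = ((ω ^ ((p + (n-1)*b) * (n - 1))) ^ c) •
              (e 0 * ((y ^ a * e (p + (n-1)*b)) * (dk' ^ b * y ^ p))) := by
            simp only [smul_mul_assoc, mul_smul_comm, mul_assoc]
        _ = ((ω ^ ((p + (n-1)*b) * (n - 1))) ^ c) •
              ((e 0 * e (p + (n-1)*b + a)) * (y ^ a * (dk' ^ b * y ^ p))) := by
            rw [ypow_e a (p + (n-1)*b)]
            simp only [mul_assoc]
    rw [key]
    by_cases hcond : 0 % n = (p + (n-1)*b + a) % n
    · have he0M : e 0 * e (p + (n-1)*b + a) = e 0 := by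
        rw [ee 0 (p + (n-1)*b + a), if_pos hcond]
        exact e_eq_mod hn he hcond.symm
      rw [he0M]
      have hcon2 : (p + a) % n = b % n := by
        refine (hdvd_mod hn).mp ?_
        have h9 : (p + a) + b * (n-1) = p + (n-1)*b + a := by ring
        rw [h9]
        refine Nat.dvd_of_mod_eq_zero ?_
        rw [← hcond, Nat.zero_mod]
      have hbr := BR a b hcon2
      have hshape : e 0 * (y ^ a * (dk' ^ b * y ^ p)) = e 0 * (y ^ a * dk' ^ b) * y ^ p := by
        simp only [mul_assoc]
      rw [hshape, hbr]
      exact Submodule.smul_mem _ _ (CORE a b hcon2)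
    · rw [ee 0 (p + (n-1)*b + a), if_neg hcond, zero_mul, smul_zero]
      exact RHS.zero_mem
  -- inclusion B ≤ RHS
  have dir1 : B ≤ RHS := by
    rw [hB]
    refine Submodule.span_le.mpr ?_
    rintro x ⟨h, hh, rfl⟩
    exact span_mul_mem (e 0) (e p * y ^ p) MONO (hAdjW h hh)
  -- inclusion RHS ≤ B
  have dir2a : ∀ u ∈ U', u * (e 0 * dk' ^ p * y ^ p) ∈ B := by
    intro u hu
    rw [hU'] at hu
    induction hu using Submodule.span_induction with
    | mem x hx =>
      obtain ⟨h, hh, rfl⟩ := hx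
      have claim : (e 0 * h * e 0) * (e 0 * dk' ^ p * y ^ p)
          = e 0 * (h * dk' ^ p) * (e p * y ^ p) := by
        calc (e 0 * h * e 0) * (e 0 * dk' ^ p * y ^ p)
            = e 0 * (h * (e 0 * (e 0 * (dk' ^ p * y ^ p)))) := by simp only [mul_assoc]
          _ = e 0 * (h * (e 0 * (dk' ^ p * y ^ p))) := by
              rw [← mul_assoc (e 0) (e 0), e00]
          _ = e 0 * (h * (dk' ^ p * (e p * y ^ p))) := by
              rw [← mul_assoc (e 0) (dk' ^ p), e0_dkp, mul_assoc]
          _ = e 0 * (h * dk' ^ p) * (e p * y ^ p) := by simp only [mul_assoc]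
      rw [claim, hB]
      exact Submodule.subset_span ⟨h * dk' ^ p, mul_mem hh (pow_mem hdkA p), rfl⟩
    | zero => rw [zero_mul]; exact B.zero_mem
    | add u₁ u₂ _ _ ih₁ ih₂ => rw [add_mul]; exact B.add_mem ih₁ ih₂
    | smul r u₁ _ ih₁ => rw [smul_mul_assoc]; exact B.smul_mem r ih₁
  have dir2b : ∀ u ∈ U', u * (e 0 * y ^ n) ∈ B := by
    intro u hu
    rw [hU'] at hu
    induction hu using Submodule.span_induction with
    | mem x hx =>
      obtain ⟨h, hh, rfl⟩ := hx
      have hnp : n - p + p = n := by omega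
      have claim : (e 0 * h * e 0) * (e 0 * y ^ n)
          = e 0 * (h * y ^ (n - p)) * (e p * y ^ p) := by
        calc (e 0 * h * e 0) * (e 0 * y ^ n)
            = e 0 * (h * (e 0 * (e 0 * y ^ n))) := by simp only [mul_assoc]
          _ = e 0 * (h * (e 0 * y ^ n)) := by rw [← mul_assoc (e 0) (e 0), e00]
          _ = e 0 * (h * (y ^ n * e 0)) := by rw [e0_yn]
          _ = e 0 * (h * (y ^ (n - p) * (y ^ p * e 0))) := by
              rw [← mul_assoc (y ^ (n-p)), ← pow_add, hnp]
          _ = e 0 * (h * (y ^ (n - p) * (e p * y ^ p))) := by rw [← ep_yp]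
          _ = e 0 * (h * y ^ (n - p)) * (e p * y ^ p) := by simp only [mul_assoc]
      rw [claim, hB]
      exact Submodule.subset_span ⟨h * y ^ (n - p), mul_mem hh (pow_mem hyA (n - p)), rfl⟩
    | zero => rw [zero_mul]; exact B.zero_mem
    | add u₁ u₂ _ _ ih₁ ih₂ => rw [add_mul]; exact B.add_mem ih₁ ih₂
    | smul r u₁ _ ih₁ => rw [smul_mul_assoc]; exact B.smul_mem r ih₁
  have dir2 : RHS ≤ B := by
    rw [hRHS]
    refine sup_le (Submodule.mul_le.mpr ?_) (Submodule.mul_le.mpr ?_)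
    · intro u hu v hv
      rw [Submodule.mem_span_singleton] at hv
      obtain ⟨μ, rfl⟩ := hv
      rw [mul_smul_comm]
      exact B.smul_mem μ (dir2a u hu)
    · intro u hu v hv
      rw [Submodule.mem_span_singleton] at hv
      obtain ⟨μ, rfl⟩ := hv
      rw [mul_smul_comm]
      exact B.smul_mem μ (dir2b u hu)
  exact le_antisymm dir1 dir2
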